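/- Let C, C₁, C₂, … be non-strict Archimedean copulas with (normalized, right-continuous at 0) generators φ, φ₁, φ₂, …. If (φ_n) converges pointwise to φ on (0,1], then for every t ∈ [0,1) and every x ∈ [t,1] one has f^t(x) ≥ limsup_{n→∞} f_n^t(x), where f^t and f_n^t denote the t-level functions of C and C_n, respectively. -/
import Mathlib


open MeasureTheory Filter Set
open scoped ENNReal

noncomputable section

/-- Right-hand derivative (of a convex function on `[0,1]`) of `f` at `x`, realized as the
infimum of the forward difference quotients with right endpoint in `(x, 1]`. -/
noncomputable def rightD (f : ℝ → ℝ) (x : ℝ) : ℝ :=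
  sInf ((fun y => (f y - f x) / (y - x)) '' Set.Ioc x 1)

/-- `φ : [0,1] → [0,∞]` is a (normalized, right-continuous at `0`) generator of an
Archimedean copula: convex, strictly decreasing, `φ 1 = 0`, finite on `(0,1]`,
right-continuous at `0` and normalized by `φ (1/2) = 1`. -/
structure IsGenerator (φ : ℝ → ℝ≥0∞) : Prop where
  convex : ∀ x ∈ Set.Icc (0:ℝ) 1, ∀ y ∈ Set.Icc (0:ℝ) 1, ∀ t ∈ Set.Icc (0:ℝ) 1,
    φ (t * x + (1 - t) * y) ≤ ENNReal.ofReal t * φ x + ENNReal.ofReal (1 - t) * φ y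
  strict_anti : ∀ x ∈ Set.Icc (0:ℝ) 1, ∀ y ∈ Set.Icc (0:ℝ) 1, x < y → φ y < φ x
  map_one : φ 1 = 0
  finite : ∀ x ∈ Set.Ioc (0:ℝ) 1, φ x < ⊤
  rightCont_zero : Filter.Tendsto φ (nhdsWithin 0 (Set.Ioi 0)) (nhds (φ 0))
  normalized : φ (1/2) = 1

/-- Pseudo-inverse `φ⁻` of a generator: `φ⁻ s = φ⁻¹ s` for `s < φ 0` and `0` for `s ≥ φ 0`. -/
noncomputable def pseudoInv (φ : ℝ → ℝ≥0∞) (s : ℝ≥0∞) : ℝ :=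
  sSup {x | x ∈ Set.Icc (0:ℝ) 1 ∧ s ≤ φ x}

/-- The Archimedean copula generated by `φ`: `C(x,y) = φ⁻(φ x + φ y)`. -/
noncomputable def archCopula (φ : ℝ → ℝ≥0∞) (x y : ℝ) : ℝ :=
  pseudoInv φ (φ x + φ y)

/-- The right-hand derivative `D⁺φ` of a generator. -/
noncomputable def Dplus (φ : ℝ → ℝ≥0∞) (x : ℝ) : ℝ :=
  rightD (fun t => (φ t).toReal) x

/-- The set `Cont(D⁺φ)` of continuity points of `D⁺φ` in `(0,1)`. -/
def ContD (φ : ℝ → ℝ≥0∞) : Set ℝ :=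
  {x | x ∈ Set.Ioo (0:ℝ) 1 ∧ ContinuousAt (Dplus φ) x}

/-- The `t`-level function `f^t(x) = φ⁻(φ t − φ x)` of the Archimedean copula generated
by `φ`. -/
noncomputable def levelFn (φ : ℝ → ℝ≥0∞) (t x : ℝ) : ℝ :=
  pseudoInv φ (φ t - φ x)

/-- The Kendall distribution function `F^Kendall(x) = x − φ(x)/D⁺φ(x)` of the Archimedean
copula generated by `φ`. -/
noncomputable def kendall (φ : ℝ → ℝ≥0∞) (x : ℝ) : ℝ :=
  x - (φ x).toReal / Dplus φ x

/-- The Markov kernel (as conditional distribution function `(x,y) ↦ K_C(x,[0,y])`) of the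
Archimedean copula generated by `φ`. -/
noncomputable def archKernel (φ : ℝ → ℝ≥0∞) (x y : ℝ) : ℝ :=
  if x = 0 ∨ x = 1 then 1
  else if y < levelFn φ 0 x then 0
  else Dplus φ x / Dplus φ (archCopula φ x y)

/-- The metric `D₁` between two copulas, expressed via their conditional distribution
functions `K₁, K₂` (with `Kᵢ x y = K_{Cᵢ}(x,[0,y])`). -/
noncomputable def D1 (K1 K2 : ℝ → ℝ → ℝ) : ℝ :=
  ∫ y in Set.Icc (0:ℝ) 1, ∫ x in Set.Icc (0:ℝ) 1, |K1 x y - K2 x y|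

/-- Conditional distribution function of the independence copula `Π`. -/
def piKernel : ℝ → ℝ → ℝ := fun _ y => y

/-- Dependence measure `ζ₁(C) = 3 D₁(C, Π)`. -/
noncomputable def zeta1 (K : ℝ → ℝ → ℝ) : ℝ := 3 * D1 K piKernel

/-- Dependence measure `r(C) = 6 ∫∫ K_C(x,[0,y])² dλ(x) dλ(y) − 2`. -/
noncomputable def rdep (K : ℝ → ℝ → ℝ) : ℝ :=
  6 * (∫ y in Set.Icc (0:ℝ) 1, ∫ x in Set.Icc (0:ℝ) 1, (K x y) ^ 2) - 2

/-- Weak conditional convergence of a sequence of copulas, in terms of their conditional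
distribution functions: for λ-a.e. `x ∈ [0,1]` the measures `K_{C_n}(x,·)` converge weakly
to `K_C(x,·)`, i.e. the conditional distribution functions converge at every continuity
point of `y ↦ K_C(x,[0,y])` in `[0,1]`. -/
def WeakCondConv (Kseq : ℕ → ℝ → ℝ → ℝ) (K : ℝ → ℝ → ℝ) : Prop :=
  ∀ᵐ x ∂(volume.restrict (Set.Icc (0:ℝ) 1)),
    ∀ y ∈ Set.Icc (0:ℝ) 1, ContinuousWithinAt (fun t => K x t) (Set.Icc 0 1) y →
      Filter.Tendsto (fun n => Kseq n x y) Filter.atTop (nhds (K x y))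

section Stmt5Aux

variable {φ : ℝ → ℝ≥0∞}

lemma IsGenerator.anti_le (hφ : IsGenerator φ) {a b : ℝ} (ha : a ∈ Set.Icc (0:ℝ) 1)
    (hb : b ∈ Set.Icc (0:ℝ) 1) (hab : a ≤ b) : φ b ≤ φ a := by
  rcases eq_or_lt_of_le hab with rfl | h
  · exact le_rfl
  · exact (hφ.strict_anti a ha b hb h).le

lemma pseudoInv_set_sub (hφ : IsGenerator φ) {t x : ℝ} (ht : t ∈ Set.Icc (0:ℝ) 1) :
    (0:ℝ) ∈ {w | w ∈ Set.Icc (0:ℝ) 1 ∧ φ t - φ x ≤ φ w} := by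
  refine ⟨⟨le_rfl, zero_le_one⟩, ?_⟩
  exact (tsub_le_self).trans (hφ.anti_le ⟨le_rfl, zero_le_one⟩ ht ht.1)

lemma pseudoInv_bdd (φ : ℝ → ℝ≥0∞) (s : ℝ≥0∞) :
    BddAbove {w | w ∈ Set.Icc (0:ℝ) 1 ∧ s ≤ φ w} :=
  ⟨1, fun w hw => hw.1.2⟩

lemma levelFn_nonneg (hφ : IsGenerator φ) {t x : ℝ} (ht : t ∈ Set.Icc (0:ℝ) 1) :
    0 ≤ levelFn φ t x :=
  le_csSup (pseudoInv_bdd φ _) (pseudoInv_set_sub hφ ht)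

lemma levelFn_le_one (hφ : IsGenerator φ) {t x : ℝ} (ht : t ∈ Set.Icc (0:ℝ) 1) :
    levelFn φ t x ≤ 1 :=
  csSup_le ⟨0, pseudoInv_set_sub hφ ht⟩ fun w hw => hw.1.2

end Stmt5Aux

/-- For non-strict Archimedean copulas, pointwise convergence of the
generators on `(0,1]` implies `f^t(x) ≥ limsup_n f_n^t(x)` for every `t ∈ [0,1)` and every
`x ∈ [t,1]`, where `f^t, f_n^t` are the `t`-level functions. -/
theorem stmt5 (φ : ℝ → ℝ≥0∞) (φseq : ℕ → ℝ → ℝ≥0∞)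
    (hφ : IsGenerator φ) (hφseq : ∀ n, IsGenerator (φseq n))
    (hns : φ 0 < ⊤) (hnsseq : ∀ n, φseq n 0 < ⊤)
    (hconv : ∀ x ∈ Set.Ioc (0:ℝ) 1,
      Filter.Tendsto (fun n => φseq n x) Filter.atTop (nhds (φ x))) :
    ∀ t ∈ Set.Ico (0:ℝ) 1, ∀ x ∈ Set.Icc t 1,
      Filter.limsup (fun n => levelFn (φseq n) t x) Filter.atTop ≤ levelFn φ t x := by
  intro t ht x hx
  have ht01 : t ∈ Set.Icc (0:ℝ) 1 := ⟨ht.1, ht.2.le⟩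
  have hx01 : x ∈ Set.Icc (0:ℝ) 1 := ⟨ht.1.trans hx.1, hx.2⟩
  have hcobdd : IsCoboundedUnder (· ≤ ·) atTop (fun n => levelFn (φseq n) t x) :=
    isCoboundedUnder_le_of_le atTop (x := 0) fun n => levelFn_nonneg (hφseq n) ht01
  have hle1 : ∀ n, levelFn (φseq n) t x ≤ 1 := fun n => levelFn_le_one (hφseq n) ht01
  set f : ℝ := levelFn φ t x with hf
  have hf0 : 0 ≤ f := levelFn_nonneg hφ ht01
  -- key step
  have key : ∀ z ∈ Set.Ioc f 1, ∀ᶠ n in atTop, levelFn (φseq n) t x ≤ z := by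
    intro z hz
    have hz0 : 0 < z := lt_of_le_of_lt hf0 hz.1
    have hzIoc : z ∈ Set.Ioc (0:ℝ) 1 := ⟨hz0, hz.2⟩
    have hz01 : z ∈ Set.Icc (0:ℝ) 1 := ⟨hz0.le, hz.2⟩
    -- x ≠ t, else f = 1
    have htx : t < x := by
      rcases eq_or_lt_of_le hx.1 with rfl | h
      · exfalso
        have h1 : (1:ℝ) ∈ {w | w ∈ Set.Icc (0:ℝ) 1 ∧ φ t - φ t ≤ φ w} := by
          refine ⟨⟨zero_le_one, le_rfl⟩, ?_⟩
          simp [tsub_self]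
        have : (1:ℝ) ≤ f := le_csSup (pseudoInv_bdd φ _) h1
        exact absurd (hz.1.trans_le hz.2) (by linarith)
      · exact h
    have hxpos : 0 < x := lt_of_le_of_lt ht.1 htx
    have hxIoc : x ∈ Set.Ioc (0:ℝ) 1 := ⟨hxpos, hx.2⟩
    have hxne : φ x ≠ ⊤ := (hφ.finite x hxIoc).ne
    have hzne : φ z ≠ ⊤ := (hφ.finite z hzIoc).ne
    -- z is not in the level set of φ
    have hznot : φ z < φ t - φ x := by
      by_contra h
      push_neg at h
      have : z ≤ f := le_csSup (pseudoInv_bdd φ _) ⟨hz01, h⟩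
      exact absurd hz.1 (not_lt.mpr this)
    have hsum : φ z + φ x < φ t :=
      ((ENNReal.cancel_of_ne hxne).lt_tsub_iff_right).mp hznot
    -- choose t''
    obtain ⟨t'', ht''Ioc, htt'', hsum'⟩ :
        ∃ t'' : ℝ, t'' ∈ Set.Ioc (0:ℝ) 1 ∧ t ≤ t'' ∧ φ z + φ x < φ t'' := by
      rcases eq_or_lt_of_le ht.1 with rfl | htpos
      · have h1 : ∀ᶠ y in nhds (φ 0), φ z + φ x < y := eventually_gt_nhds hsum
        have h2 : ∀ᶠ s in nhdsWithin (0:ℝ) (Set.Ioi 0), φ z + φ x < φ s :=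
          hφ.rightCont_zero.eventually h1
        have h3 : ∀ᶠ s in nhdsWithin (0:ℝ) (Set.Ioi 0), s ∈ Set.Ioc (0:ℝ) 1 := by
          filter_upwards [self_mem_nhdsWithin,
            eventually_nhdsWithin_of_eventually_nhds (eventually_lt_nhds one_pos)]
            with s h1 h2
          exact ⟨h1, h2.le⟩
        obtain ⟨s, hs1, hs2⟩ := (h3.and h2).exists
        exact ⟨s, hs1, hs1.1.le, hs2⟩
      · exact ⟨t, ⟨htpos, ht.2.le⟩, le_rfl, hsum⟩
    have ht''01 : t'' ∈ Set.Icc (0:ℝ) 1 := ⟨ht''Ioc.1.le, ht''Ioc.2⟩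
    -- convergence
    have hz' := hconv z hzIoc
    have hx' := hconv x hxIoc
    have ht'' := hconv t'' ht''Ioc
    have hev : ∀ᶠ n in atTop, φseq n z + φseq n x < φseq n t'' :=
      Filter.Tendsto.eventually_lt (hz'.add hx') ht'' hsum'
    filter_upwards [hev] with n hn
    have hxne' : φseq n x ≠ ⊤ := ((hφseq n).finite x hxIoc).ne
    have h1 : levelFn (φseq n) t x ≤ levelFn (φseq n) t'' x := by
      unfold levelFn pseudoInv
      apply csSup_le_csSup (pseudoInv_bdd (φseq n) (φseq n t'' - φseq n x))
        (Set.nonempty_of_mem (pseudoInv_set_sub (hφseq n) (x := x) ht01))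
      intro w hw
      refine ⟨hw.1, le_trans (tsub_le_tsub_right
        ((hφseq n).anti_le ht01 ht''01 htt'') _) hw.2⟩
    refine h1.trans (csSup_le (Set.nonempty_of_mem (pseudoInv_set_sub (hφseq n) (x := x) ht''01)) ?_)
    intro w hw
    have hzw : φseq n z < φseq n w :=
      lt_of_lt_of_le (((ENNReal.cancel_of_ne hxne').lt_tsub_iff_right).mpr hn) hw.2
    by_contra h
    push_neg at h
    exact absurd ((hφseq n).anti_le hz01 hw.1 h.le) (not_le.mpr hzw)
  -- conclude
  refine le_of_forall_pos_le_add ?_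
  intro ε hε
  rcases le_or_gt 1 (f + ε) with h1 | h1
  · exact le_trans (limsup_le_of_le hcobdd (Eventually.of_forall hle1)) h1
  · have : f < f + ε := by linarith
    exact limsup_le_of_le hcobdd (key (f + ε) ⟨this, h1.le⟩)
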